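/- Let n ≥ 3 and let v, w : Fin n → E be two configurations of points in the Euclidean plane such that v is injective and there exist indices a, b, c for which v a, v b, v c are affinely independent. If all oriented angles agree, i.e. for all indices i, j, k one has ∡ (v j) (v i) (v k) = ∡ (w j) (w i) (w k), then there exists a real number r > 0 such that dist (w i) (w j) = r * dist (v i) (v j) for all i, j; that is, the configuration w is directly similar to v, so a planar point configuration with at least one affinely independent triple is determined up to similarity by its oriented angle measurements. -/

import Mathlib

open EuclideanGeometry

noncomputable section

local notation "E" => EuclideanSpace ℝ (Fin 2)

instance : Fact (Module.finrank ℝ (EuclideanSpace ℝ (Fin 2)) = 2) :=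
  ⟨finrank_euclideanSpace_fin⟩

instance : Module.Oriented ℝ (EuclideanSpace ℝ (Fin 2)) (Fin 2) :=
  ⟨(PiLp.basisFun 2 ℝ (Fin 2)).orientation⟩

attribute [local instance] Complex.finrank_real_complex_fact

open Complex in
/-- oangle over `ℂ` in terms of `arg` of the quotient. -/
private lemma oangle_eq_arg_div {A B : ℂ} (hA : A ≠ 0) :
    Complex.orientation.oangle A B = (Complex.arg (B / A) : Real.Angle) := by
  rw [Complex.oangle]
  congr 1
  have h : (starRingEnd ℂ) A * B = (Complex.normSq A : ℂ) * (B / A) := by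
    field_simp
    rw [← Complex.mul_conj]
    ring
  rw [h, Complex.arg_real_mul _ (Complex.normSq_pos.2 hA)]

open Complex in
/-- The core similarity lemma for a nondegenerate triangle in `ℂ`, phrased for the
vectors at one vertex. -/
private lemma core {X Y X' Y' : ℂ} (hX : X ≠ 0) (hX' : X' ≠ 0) (hY' : Y' ≠ 0)
    (him : (Y / X).im ≠ 0)
    (h1 : Complex.orientation.oangle X Y = Complex.orientation.oangle X' Y')
    (h2 : Complex.orientation.oangle (-X) (Y - X)
        = Complex.orientation.oangle (-X') (Y' - X')) :
    Y' / X' = Y / X := by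
  set u : ℂ := Y / X with hu_def
  set u' : ℂ := Y' / X' with hu'_def
  have hY : Y ≠ 0 := by
    intro h
    rw [h, zero_div] at hu_def
    simp [hu_def] at him
  have hu0 : u ≠ 0 := div_ne_zero hY hX
  have hu'0 : u' ≠ 0 := div_ne_zero hY' hX'
  have hnX : (-X : ℂ) ≠ 0 := neg_ne_zero.2 hX
  have hnX' : (-X' : ℂ) ≠ 0 := neg_ne_zero.2 hX'
  have e1 : (Y - X) / (-X) = 1 - u := by
    rw [hu_def, div_neg, sub_div, div_self hX]
    ring
  have e1' : (Y' - X') / (-X') = 1 - u' := by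
    rw [hu'_def, div_neg, sub_div, div_self hX']
    ring
  have h1' : Complex.arg u = Complex.arg u' := by
    have := h1
    rw [oangle_eq_arg_div hX, oangle_eq_arg_div hX'] at this
    exact Complex.arg_coe_angle_eq_iff.1 (by rw [← hu_def, ← hu'_def] at this; exact this)
  have h2' : Complex.arg (1 - u) = Complex.arg (1 - u') := by
    have := h2
    rw [oangle_eq_arg_div hnX, oangle_eq_arg_div hnX', e1, e1'] at this
    exact Complex.arg_coe_angle_eq_iff.1 this
  -- from h1', u' is a positive real multiple of u
  set t : ℝ := ‖u'‖ / ‖u‖ with ht_def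
  have ht : ((t : ℝ) : ℂ) * u = u' := by
    rw [ht_def]
    push_cast
    exact (Complex.arg_eq_arg_iff hu0 hu'0).1 h1'
  have htpos : 0 < t := div_pos (norm_pos_iff.mpr hu'0) (norm_pos_iff.mpr hu0)
  have hu1 : (1 : ℂ) - u ≠ 0 := by
    intro h
    have : u = 1 := by linear_combination -h
    rw [this] at him
    simp at him
  have him' : u'.im ≠ 0 := by
    rw [← ht]
    simp only [Complex.mul_im, Complex.ofReal_re, Complex.ofReal_im, zero_mul, add_zero]
    intro h
    rcases mul_eq_zero.1 (by linarith [h] : t * u.im = 0) with h' | h'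
    · exact htpos.ne' h'
    · exact him h'
  have hu'1 : (1 : ℂ) - u' ≠ 0 := by
    intro h
    have : u' = 1 := by linear_combination -h
    rw [this] at him'
    simp at him'
  set s : ℝ := ‖1 - u'‖ / ‖1 - u‖ with hs_def
  have hs : ((s : ℝ) : ℂ) * (1 - u) = 1 - u' := by
    rw [hs_def]
    push_cast
    exact (Complex.arg_eq_arg_iff hu1 hu'1).1 h2'
  have hspos : 0 < s := div_pos (norm_pos_iff.mpr hu'1) (norm_pos_iff.mpr hu1)
  -- combine
  have hkey : ((s : ℂ)) * (1 - u) = 1 - (t : ℂ) * u := by rw [hs, ht]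
  have hre : s * (1 - u).re = (1 - (t : ℂ) * u).re := by
    rw [← hkey]; simp [Complex.mul_re]
  have himeq : s * (1 - u).im = (1 - (t : ℂ) * u).im := by
    rw [← hkey]; simp [Complex.mul_im]
  simp only [Complex.sub_re, Complex.one_re, Complex.sub_im, Complex.one_im, Complex.mul_re,
    Complex.mul_im, Complex.ofReal_re, Complex.ofReal_im, zero_mul, zero_sub, sub_zero,
    zero_add, add_zero] at hre himeq
  have hst : s = t := by
    have : (t - s) * u.im = 0 := by linarith
    rcases mul_eq_zero.1 this with h' | h'
    · linarith
    · exact absurd h' him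
  have ht1 : t = 1 := by
    rw [hst] at hre
    have : (1 - t) * (1 : ℝ) = 0 := by linarith
    linarith
  rw [← ht, ht1]
  simp

/-- A planar point configuration with at least one affinely independent triple is determined
up to similarity by its oriented angle measurements: if all oriented angles of `w` agree with
those of `v`, then `w` is obtained from `v` by scaling all distances by some factor `r > 0`. -/
theorem congruent_up_to_similarity_of_oangles_eq (n : ℕ) (hn : 3 ≤ n)
    (v w : Fin n → E) (hv : Function.Injective v)
    (habc : ∃ a b c : Fin n, AffineIndependent ℝ ![v a, v b, v c])
    (hang : ∀ i j k : Fin n, ∡ (v j) (v i) (v k) = ∡ (w j) (w i) (w k)) :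
    ∃ r : ℝ, 0 < r ∧ ∀ i j : Fin n, dist (w i) (w j) = r * dist (v i) (v j) := by
  classical
  obtain ⟨a, b, c, habc⟩ := habc
  rw [affineIndependent_iff_not_collinear_set] at habc
  set f : EuclideanSpace ℝ (Fin 2) ≃ₗᵢ[ℝ] ℂ := Complex.orthonormalBasisOneI.repr.symm with hf
  -- transfer angle hypothesis to ℂ
  have hC : ∀ i j k : Fin n,
      Complex.orientation.oangle (f (v j) - f (v i)) (f (v k) - f (v i))
        = Complex.orientation.oangle (f (w j) - f (w i)) (f (w k) - f (w i)) := by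
    have hor := Complex.basisOneI.orientation_eq_or_eq_neg
      (Orientation.map (Fin 2) f.toLinearEquiv Module.Oriented.positiveOrientation)
    rcases hor with h | h
    · have e1 : ∀ p q r : E, Complex.orientation.oangle (f p - f q) (f r - f q) = ∡ p q r := by
        intro p q r
        rw [show Complex.orientation = Complex.basisOneI.orientation from rfl, ← h,
          ← map_sub, ← map_sub, Orientation.oangle_map]
        simp [EuclideanGeometry.oangle, vsub_eq_sub]
      intro i j k
      rw [e1, e1, hang]
    · have e1 : ∀ p q r : E, Complex.orientation.oangle (f p - f q) (f r - f q) = -∡ p q r := by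
        intro p q r
        have h' : Complex.orientation
            = -(Orientation.map (Fin 2) f.toLinearEquiv Module.Oriented.positiveOrientation) := by
          rw [h]
          exact (neg_neg Complex.basisOneI.orientation).symm
        rw [h', Orientation.oangle_neg_orientation_eq_neg,
          ← map_sub, ← map_sub, Orientation.oangle_map]
        simp [EuclideanGeometry.oangle, vsub_eq_sub]
      intro i j k
      rw [e1, e1, hang]
  -- existence of a non-collinear witness among a, b, c for any pair
  have hpick : ∀ i j : Fin n, v i ≠ v j →
      ∃ k : Fin n, (k = a ∨ k = b ∨ k = c) ∧
        ¬Collinear ℝ ({v i, v j, v k} : Set (EuclideanSpace ℝ (Fin 2))) := by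
    intro i j hij
    by_contra hcon
    push_neg at hcon
    have ha' := hcon a (Or.inl rfl)
    have hb' := hcon b (Or.inr (Or.inl rfl))
    have hc' := hcon c (Or.inr (Or.inr rfl))
    have ma : v a ∈ line[ℝ, v i, v j] :=
      ha'.mem_affineSpan_of_mem_of_ne (by simp) (by simp) (by simp) hij
    have mb : v b ∈ line[ℝ, v i, v j] :=
      hb'.mem_affineSpan_of_mem_of_ne (by simp) (by simp) (by simp) hij
    have mc : v c ∈ line[ℝ, v i, v j] :=
      hc'.mem_affineSpan_of_mem_of_ne (by simp) (by simp) (by simp) hij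
    exact habc (collinear_triple_of_mem_affineSpan_pair ma mb mc)
  -- w is injective on distinct indices
  have hwne : ∀ i j : Fin n, i ≠ j → w i ≠ w j := by
    intro i j hij heq
    obtain ⟨k, _, hk⟩ := hpick i j (hv.ne hij)
    have h0 : ∡ (v i) (v k) (v j) ≠ 0 := by
      intro h
      apply hk
      have := oangle_eq_zero_or_eq_pi_iff_collinear.1 (Or.inl h)
      rw [Set.pair_comm (v k) (v j)] at this
      exact this
    apply h0
    rw [hang k i j, heq]
    exact oangle_self_left_right _ _
  -- the triangle step
  have hT : ∀ i j k : Fin n, ¬Collinear ℝ ({v i, v j, v k} : Set (EuclideanSpace ℝ (Fin 2))) →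
      (f (w j) - f (w i)) / (f (v j) - f (v i)) = (f (w k) - f (w i)) / (f (v k) - f (v i)) := by
    intro i j k hcol
    have hvij : v i ≠ v j := by
      intro h
      exact hcol (by rw [h, Set.insert_idem]; exact collinear_pair ℝ _ _)
    have hvik : v i ≠ v k := by
      intro h
      apply hcol
      rw [h, Set.insert_comm, Set.pair_eq_singleton]
      exact collinear_pair ℝ _ _
    have hij : i ≠ j := fun h => hvij (congrArg v h)
    have hik : i ≠ k := fun h => hvik (congrArg v h)
    have hX : f (v j) - f (v i) ≠ 0 :=
      sub_ne_zero.2 (fun h => hvij (f.injective h).symm)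
    have hY : f (v k) - f (v i) ≠ 0 :=
      sub_ne_zero.2 (fun h => hvik (f.injective h).symm)
    have hX' : f (w j) - f (w i) ≠ 0 :=
      sub_ne_zero.2 (fun h => hwne i j hij (f.injective h).symm)
    have hY' : f (w k) - f (w i) ≠ 0 :=
      sub_ne_zero.2 (fun h => hwne i k hik (f.injective h).symm)
    have him : ((f (v k) - f (v i)) / (f (v j) - f (v i))).im ≠ 0 := by
      intro h0
      apply hcol
      set r : ℝ := ((f (v k) - f (v i)) / (f (v j) - f (v i))).re with hr
      have hratio : f (v k) - f (v i) = (r : ℂ) * (f (v j) - f (v i)) := by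
        have : ((f (v k) - f (v i)) / (f (v j) - f (v i))) = (r : ℂ) := by
          apply Complex.ext
          · simp [hr]
          · simp [h0]
        field_simp at this
        linear_combination this
      have hvec : v k - v i = r • (v j - v i) := by
        apply f.injective
        rw [map_sub, map_smul]
        rw [hratio]
        simp [Complex.real_smul]
      rw [collinear_iff_of_mem (Set.mem_insert (v i) _)]
      refine ⟨v j - v i, ?_⟩
      intro p hp
      simp only [Set.mem_insert_iff, Set.mem_singleton_iff] at hp
      rcases hp with h | h | h
      · exact ⟨0, by simp [h]⟩
      · refine ⟨1, ?_⟩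
        rw [h]
        simp [vadd_eq_add]
      · refine ⟨r, ?_⟩
        rw [h]
        have : v k = (v k - v i) + v i := by abel
        rw [this, hvec]
        simp [vadd_eq_add]
    have h1 := hC i j k
    have h2 := hC j i k
    have ea : f (v i) - f (v j) = -(f (v j) - f (v i)) := by ring
    have eb : f (v k) - f (v j) = (f (v k) - f (v i)) - (f (v j) - f (v i)) := by ring
    have ea' : f (w i) - f (w j) = -(f (w j) - f (w i)) := by ring
    have eb' : f (w k) - f (w j) = (f (w k) - f (w i)) - (f (w j) - f (w i)) := by ring
    rw [ea, eb, ea', eb'] at h2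
    have hcore := core hX hX' hY' him h1 h2
    rw [div_eq_div_iff hX hY]
    rw [div_eq_div_iff hX' hX] at hcore
    linear_combination -hcore
  -- symmetry of the ratio
  have hsym : ∀ i j : Fin n,
      (f (w j) - f (w i)) / (f (v j) - f (v i)) = (f (w i) - f (w j)) / (f (v i) - f (v j)) := by
    intro i j
    rw [show f (w i) - f (w j) = -(f (w j) - f (w i)) by ring,
      show f (v i) - f (v j) = -(f (v j) - f (v i)) by ring, neg_div_neg_eq]
  set z : ℂ := (f (w b) - f (w a)) / (f (v b) - f (v a)) with hz_def
  -- base values among a b c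
  have hab : a ≠ b := by
    intro h
    exact habc (by rw [h, Set.insert_idem]; exact collinear_pair ℝ _ _)
  have hcol_bac : ¬Collinear ℝ ({v b, v a, v c} : Set (EuclideanSpace ℝ (Fin 2))) := by
    rwa [Set.insert_comm]
  have zac : (f (w c) - f (w a)) / (f (v c) - f (v a)) = z := (hT a b c habc).symm
  have zbc : (f (w c) - f (w b)) / (f (v c) - f (v b)) = z := by
    rw [← hT b a c hcol_bac, ← hsym]
  have hbase : ∀ p q : Fin n, (p = a ∨ p = b ∨ p = c) → (q = a ∨ q = b ∨ q = c) → p ≠ q →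
      (f (w q) - f (w p)) / (f (v q) - f (v p)) = z := by
    intro p q hp hq hpq
    rcases hp with hp | hp | hp <;> rcases hq with hq | hq | hq <;> subst hp <;> subst hq
    · exact absurd rfl hpq
    · rfl
    · exact zac
    · rw [hsym]
    · exact absurd rfl hpq
    · exact zbc
    · rw [hsym]; exact zac
    · rw [hsym]; exact zbc
    · exact absurd rfl hpq
  -- the ratio is constant
  have hconst : ∀ i j : Fin n, i ≠ j →
      (f (w j) - f (w i)) / (f (v j) - f (v i)) = z := by
    intro i j hij
    obtain ⟨k, hkmem, hk⟩ := hpick i j (hv.ne hij)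
    have step1 : (f (w j) - f (w i)) / (f (v j) - f (v i))
        = (f (w k) - f (w i)) / (f (v k) - f (v i)) := hT i j k hk
    have hvik : v i ≠ v k := by
      intro h
      apply hk
      rw [h, Set.insert_comm, Set.pair_eq_singleton]
      exact collinear_pair ℝ _ _
    obtain ⟨k₂, hk₂mem, hk₂⟩ := hpick k i (fun h => hvik h.symm)
    have hkk₂ : k ≠ k₂ := by
      intro h
      apply hk₂
      rw [← h]
      refine (collinear_pair ℝ (v k) (v i)).subset ?_
      intro x hx
      simp only [Set.mem_insert_iff, Set.mem_singleton_iff] at hx ⊢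
      tauto
    have step2 : (f (w i) - f (w k)) / (f (v i) - f (v k))
        = (f (w k₂) - f (w k)) / (f (v k₂) - f (v k)) := hT k i k₂ hk₂
    rw [step1, hsym, step2]
    exact hbase k k₂ hkmem hk₂mem hkk₂
  -- conclusion
  have hQab : f (w b) - f (w a) ≠ 0 :=
    sub_ne_zero.2 (fun h => hwne a b hab (f.injective h).symm)
  have hPab : f (v b) - f (v a) ≠ 0 :=
    sub_ne_zero.2 (fun h => hv.ne hab (f.injective h).symm)
  have hz0 : z ≠ 0 := div_ne_zero hQab hPab
  refine ⟨‖z‖, norm_pos_iff.mpr hz0, ?_⟩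
  intro i j
  by_cases hij : i = j
  · subst hij; simp
  · have hPij : f (v j) - f (v i) ≠ 0 :=
      sub_ne_zero.2 (fun h => hv.ne hij (f.injective h).symm)
    have hmul : f (w j) - f (w i) = z * (f (v j) - f (v i)) :=
      (div_eq_iff hPij).1 (hconst i j hij)
    have hd1 : dist (w i) (w j) = ‖f (w j) - f (w i)‖ := by
      rw [← f.dist_map (w i) (w j), Complex.dist_eq, ← norm_neg]
      congr 1
      ring
    have hd2 : dist (v i) (v j) = ‖f (v j) - f (v i)‖ := by
      rw [← f.dist_map (v i) (v j), Complex.dist_eq, ← norm_neg]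
      congr 1
      ring
    rw [hd1, hd2, hmul, norm_mul]
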